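/- For every x ≥ (3√3)/2 − 3/2 and every ε' > 0, there exists a centered random variable ξ taking three values with Eξ² = 1, Eξ⁴ ≤ x + ε', and P(ξ ≥ 0) = (2√3 − 3)/x. -/

import Mathlib

open MeasureTheory ProbabilityTheory Real

set_option maxHeartbeats 1000000

lemma integrable_tripoint (f : ℝ → ℝ) (a : ℝ) (c : ℝ) :
    Integrable f (ENNReal.ofReal c • Measure.dirac a) := by
  refine Integrable.smul_measure ?_ ENNReal.ofReal_ne_top
  exact (integrable_const (f a)).congr (ae_eq_dirac f).symm

lemma integral_tripoint (p q r : ℝ) (hp : 0 ≤ p) (hq : 0 ≤ q) (hr : 0 ≤ r)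
    (a b c : ℝ) (f : ℝ → ℝ) :
    ∫ y, f y ∂(ENNReal.ofReal p • Measure.dirac a + ENNReal.ofReal q • Measure.dirac b
      + ENNReal.ofReal r • Measure.dirac c) = p * f a + q * f b + r * f c := by
  rw [integral_add_measure ((integrable_tripoint f a p).add_measure (integrable_tripoint f b q))
      (integrable_tripoint f c r),
    integral_add_measure (integrable_tripoint f a p) (integrable_tripoint f b q),
    integral_smul_measure, integral_smul_measure, integral_smul_measure,
    integral_dirac, integral_dirac, integral_dirac,
    ENNReal.toReal_ofReal hp, ENNReal.toReal_ofReal hq, ENNReal.toReal_ofReal hr]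
  simp [smul_eq_mul]

lemma fourth_bound (x ε' q t T M : ℝ) (hq0 : 0 ≤ q) (hq1 : q ≤ 1) (ht0 : 0 < t)
    (ht1 : t ≤ 1) (hM0 : 0 ≤ M) (hM1 : M ≤ 1) (hT : 0 < T)
    (htE : t * (1 + 4 * (T + 1) ^ 3) ≤ ε' / 2) (hε : 0 < ε') :
    x + q * t ^ 4 + q * t * (4 * T ^ 3 + 6 * T ^ 2 * M + 4 * T * M ^ 2 + M ^ 3)
      ≤ x + ε' := by
  have ht3 : t ^ 3 ≤ 1 := pow_le_one₀ ht0.le ht1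
  have h1 : q * t ^ 4 ≤ t := by
    calc q * t ^ 4 ≤ 1 * t ^ 4 := mul_le_mul_of_nonneg_right hq1 (by positivity)
      _ = t * t ^ 3 := by ring
      _ ≤ t * 1 := mul_le_mul_of_nonneg_left ht3 ht0.le
      _ = t := mul_one t
  have hqt : q * t ≤ t := by nlinarith
  have hqt0 : 0 ≤ q * t := by positivity
  have hinner : 4 * T ^ 3 + 6 * T ^ 2 * M + 4 * T * M ^ 2 + M ^ 3
      ≤ 4 * T ^ 3 + 6 * T ^ 2 + 4 * T + 1 := by
    have hM2 : M ^ 2 ≤ 1 := by nlinarith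
    have hM3 : M ^ 3 ≤ 1 := by nlinarith
    have e1 : T ^ 2 * M ≤ T ^ 2 := mul_le_of_le_one_right (sq_nonneg T) hM1
    have e2 : T * M ^ 2 ≤ T := mul_le_of_le_one_right hT.le hM2
    linarith
  have hinner0 : 0 ≤ 4 * T ^ 3 + 6 * T ^ 2 * M + 4 * T * M ^ 2 + M ^ 3 := by positivity
  have h2 : q * t * (4 * T ^ 3 + 6 * T ^ 2 * M + 4 * T * M ^ 2 + M ^ 3)
      ≤ t * (4 * T ^ 3 + 6 * T ^ 2 + 4 * T + 1) := by
    calc q * t * (4 * T ^ 3 + 6 * T ^ 2 * M + 4 * T * M ^ 2 + M ^ 3)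
        ≤ q * t * (4 * T ^ 3 + 6 * T ^ 2 + 4 * T + 1) :=
          mul_le_mul_of_nonneg_left hinner hqt0
      _ ≤ t * (4 * T ^ 3 + 6 * T ^ 2 + 4 * T + 1) :=
          mul_le_mul_of_nonneg_right hqt (by positivity)
  have h3 : t + t * (4 * T ^ 3 + 6 * T ^ 2 + 4 * T + 1) ≤ t * (1 + 4 * (T + 1) ^ 3) := by
    nlinarith [sq_nonneg T]
  linarith

theorem stmt7 (x : ℝ) (hx : 3 * Real.sqrt 3 / 2 - 3 / 2 ≤ x) (ε' : ℝ) (hε : 0 < ε') :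
    ∃ (μ : Measure ℝ) (_ : IsProbabilityMeasure μ) (x₁ x₂ x₃ : ℝ),
      x₁ < x₂ ∧ x₂ < 0 ∧ 0 < x₃ ∧
      μ (({x₁, x₂, x₃} : Set ℝ)ᶜ) = 0 ∧
      (∫ y, y ∂μ) = 0 ∧ (∫ y, y ^ 2 ∂μ) = 1 ∧ (∫ y, y ^ 4 ∂μ) ≤ x + ε' ∧
      μ {y | 0 ≤ y} = ENNReal.ofReal ((2 * Real.sqrt 3 - 3) / x) := by
  set σ := Real.sqrt 3 with hσdef
  have hσ2 : σ ^ 2 = 3 := Real.sq_sqrt (by norm_num)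
  have hσ0 : 0 < σ := Real.sqrt_pos.mpr (by norm_num)
  have hσ1 : 1 < σ := by nlinarith
  have hσlt : σ < 2 := by nlinarith
  have hσ32 : 3 / 2 < σ := by nlinarith
  have hxpos : 0 < x := by nlinarith
  set a : ℝ := (3 - σ) / 2 with ha_def
  set b : ℝ := 2 * σ - 3 with hb_def
  have hapos : 0 < a := by simp only [ha_def]; linarith
  have hbpos : 0 < b := by simp only [hb_def]; linarith
  have hab_le : a + b ≤ x := by simp only [ha_def, hb_def]; linarith
  set p : ℝ := a / x with hp_def
  set r : ℝ := b / x with hr_def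
  set q : ℝ := 1 - (a + b) / x with hq_def
  have hppos : 0 < p := div_pos hapos hxpos
  have hrpos : 0 < r := div_pos hbpos hxpos
  have hq0 : 0 ≤ q := by
    have : (a + b) / x ≤ 1 := (div_le_one hxpos).mpr hab_le
    simp only [hq_def]; linarith
  have hq1 : q ≤ 1 := by
    have : 0 ≤ (a + b) / x := by positivity
    simp only [hq_def]; linarith
  have hsum : p + q + r = 1 := by
    simp only [hp_def, hq_def, hr_def]; field_simp; ring
  -- key point T
  have hTarg : 0 ≤ a * x / (b * (a + b)) := by positivity
  set T : ℝ := Real.sqrt (a * x / (b * (a + b))) with hT_def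
  have hTpos : 0 < T := Real.sqrt_pos.mpr (by positivity)
  have hT2 : T ^ 2 = a * x / (b * (a + b)) := Real.sq_sqrt hTarg
  have hT2' : b * (a + b) * T ^ 2 = a * x := by
    rw [hT2]; field_simp
  have hab : a * (σ - 1) = b := by
    simp only [ha_def, hb_def]; linear_combination (-1 / 2) * hσ2
  have haσ : a * σ = a + b := by
    simp only [ha_def, hb_def]; linear_combination (-1 / 2) * hσ2
  have hbT2 : b * σ * T ^ 2 = x := by
    have h : a * (b * σ * T ^ 2 - x) = 0 := by
      linear_combination hT2' + T ^ 2 * b * haσ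
    rcases mul_eq_zero.mp h with h' | h'
    · exact absurd h' (ne_of_gt hapos)
    · linarith
  set s : ℝ := (σ - 1) * T with hs_def
  have hspos : 0 < s := mul_pos (by linarith) hTpos
  have hK2 : a * s ^ 2 + b * T ^ 2 = x := by
    simp only [hs_def]
    linear_combination (T ^ 2 * (σ - 1)) * hab + hbT2
  have hK4 : a * s ^ 4 + b * T ^ 4 = x ^ 2 := by
    simp only [hs_def]
    linear_combination (T ^ 4 * (σ - 1) ^ 3) * hab + (b * T ^ 4 * (σ - 3)) * hσ2
      + (b * σ * T ^ 2 + x) * hbT2 - b ^ 2 * T ^ 4 * hσ2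
  -- choose t
  set E : ℝ := ε' / (1 + 4 * (T + 1) ^ 3) with hE_def
  have hD0 : (0:ℝ) < 1 + 4 * (T + 1) ^ 3 := by positivity
  have hEpos : 0 < E := div_pos hε hD0
  set t : ℝ := min (min s r) (min 1 E) / 2 with ht_def
  have htpos : 0 < t := by
    apply div_pos _ (by norm_num : (0:ℝ) < 2)
    simp only [lt_min_iff]
    exact ⟨⟨hspos, hrpos⟩, by norm_num, hEpos⟩
  have hts : t < s := by
    have h1 : min (min s r) (min 1 E) ≤ s := le_trans (min_le_left _ _) (min_le_left _ _)
    simp only [ht_def]; linarith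
  have htr : t ≤ r := by
    have h1 : min (min s r) (min 1 E) ≤ r := le_trans (min_le_left _ _) (min_le_right _ _)
    simp only [ht_def]; linarith [htpos]
  have ht1 : t ≤ 1 := by
    have h1 : min (min s r) (min 1 E) ≤ 1 := le_trans (min_le_right _ _) (min_le_left _ _)
    simp only [ht_def]; linarith [htpos]
  have htE : t * (1 + 4 * (T + 1) ^ 3) ≤ ε' / 2 := by
    have h1 : min (min s r) (min 1 E) ≤ E := le_trans (min_le_right _ _) (min_le_right _ _)
    have h2 : t ≤ E / 2 := by simp only [ht_def]; linarith
    have h4 : E / 2 * (1 + 4 * (T + 1) ^ 3) = ε' / 2 := by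
      simp only [hE_def]; field_simp
    calc t * (1 + 4 * (T + 1) ^ 3) ≤ E / 2 * (1 + 4 * (T + 1) ^ 3) :=
          mul_le_mul_of_nonneg_right h2 hD0.le
      _ = ε' / 2 := h4
  set M : ℝ := q * t / r with hM_def
  have hM0 : 0 ≤ M := by positivity
  have hM1 : M ≤ 1 := by
    rw [hM_def, div_le_one hrpos]
    calc q * t ≤ 1 * t := mul_le_mul_of_nonneg_right hq1 htpos.le
      _ ≤ r := by linarith
  have hrM : r * M = q * t := by
    simp only [hM_def]; field_simp
  set u : ℝ := T + M with hu_def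
  have hupos : 0 < u := by simp only [hu_def]; linarith
  -- mass-point identities
  have hps : p * s = r * T := by
    simp only [hp_def, hr_def, hs_def]
    field_simp
    linear_combination T * hab + ((T - 1) / 2) * hσ2
  have hS2_1 : p * s ^ 2 + r * T ^ 2 = 1 := by
    simp only [hp_def, hr_def]
    field_simp
    linear_combination hK2
  have hS4_1 : p * s ^ 4 + r * T ^ 4 = x := by
    simp only [hp_def, hr_def]
    field_simp
    linear_combination hK4
  set S2 : ℝ := p * s ^ 2 + q * t ^ 2 + r * u ^ 2 with hS2_def
  set S4 : ℝ := p * s ^ 4 + q * t ^ 4 + r * u ^ 4 with hS4_def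
  have hS2eq : S2 = 1 + q * t ^ 2 + 2 * T * (q * t) + M * (q * t) := by
    simp only [hS2_def, hu_def]
    linear_combination hS2_1 + (2 * T + M) * hrM
  have hS2ge : 1 ≤ S2 := by
    rw [hS2eq]
    have h1 : 0 ≤ q * t ^ 2 := mul_nonneg hq0 (sq_nonneg t)
    have h2 : 0 ≤ 2 * T * (q * t) :=
      mul_nonneg (by linarith) (mul_nonneg hq0 htpos.le)
    have h3 : 0 ≤ M * (q * t) := mul_nonneg hM0 (mul_nonneg hq0 htpos.le)
    linarith
  have hS4eq : S4 = x + q * t ^ 4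
      + q * t * (4 * T ^ 3 + 6 * T ^ 2 * M + 4 * T * M ^ 2 + M ^ 3) := by
    simp only [hS4_def, hu_def]
    linear_combination hS4_1 + (4 * T ^ 3 + 6 * T ^ 2 * M + 4 * T * M ^ 2 + M ^ 3) * hrM
  have hS4le : S4 ≤ x + ε' := by
    rw [hS4eq]
    exact fourth_bound x ε' q t T M hq0 hq1 htpos ht1 hM0 hM1 hTpos htE hε
  have hS4nn : 0 ≤ S4 := by
    rw [hS4eq]
    have h1 : 0 ≤ q * t ^ 4 := by positivity
    have h2 : 0 ≤ q * t * (4 * T ^ 3 + 6 * T ^ 2 * M + 4 * T * M ^ 2 + M ^ 3) := by positivity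
    linarith
  -- scaling
  set w : ℝ := Real.sqrt S2 with hw_def
  have hw1 : 1 ≤ w := by
    have h := Real.sqrt_le_sqrt hS2ge
    rwa [Real.sqrt_one] at h
  have hwpos : 0 < w := lt_of_lt_of_le one_pos hw1
  have hw2 : w ^ 2 = S2 := Real.sq_sqrt (le_trans zero_le_one hS2ge)
  have hw4 : 1 ≤ w ^ 4 := by
    have h := pow_le_pow_left₀ zero_le_one hw1 4
    simpa using h
  refine ⟨ENNReal.ofReal p • Measure.dirac (-s / w) + ENNReal.ofReal q • Measure.dirac (-t / w)
      + ENNReal.ofReal r • Measure.dirac (u / w), ?_, -s / w, -t / w, u / w,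
      ?_, ?_, ?_, ?_, ?_, ?_, ?_, ?_⟩
  · constructor
    simp only [Measure.add_apply, Measure.smul_apply, smul_eq_mul, Measure.dirac_apply,
      Set.indicator_of_mem (Set.mem_univ _), Pi.one_apply, mul_one]
    rw [← ENNReal.ofReal_add hppos.le hq0, ← ENNReal.ofReal_add (by linarith) hrpos.le, hsum]
    exact ENNReal.ofReal_one
  · -- x₁ < x₂
    gcongr

  · exact div_neg_of_neg_of_pos (by linarith) hwpos
  · exact div_pos hupos hwpos
  · -- complement
    simp only [Measure.add_apply, Measure.smul_apply, smul_eq_mul, Measure.dirac_apply]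
    rw [Set.indicator_of_notMem, Set.indicator_of_notMem, Set.indicator_of_notMem]
    · simp
    · simp [Set.mem_compl_iff]
    · simp [Set.mem_compl_iff]
    · simp [Set.mem_compl_iff]
  · -- mean
    rw [integral_tripoint p q r hppos.le hq0 hrpos.le _ _ _ (fun y => y)]
    have h0 : -(p * s) - q * t + r * u = 0 := by
      simp only [hu_def]; linear_combination hrM - hps
    have : p * (-s / w) + q * (-t / w) + r * (u / w)
        = (-(p * s) - q * t + r * u) / w := by ring
    rw [this, h0, zero_div]
  · -- second moment
    rw [integral_tripoint p q r hppos.le hq0 hrpos.le _ _ _ (fun y => y ^ 2)]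
    have h : p * (-s / w) ^ 2 + q * (-t / w) ^ 2 + r * (u / w) ^ 2 = S2 / w ^ 2 := by
      simp only [hS2_def]; field_simp
    rw [h, hw2, div_self (by linarith)]
  · -- fourth moment
    rw [integral_tripoint p q r hppos.le hq0 hrpos.le _ _ _ (fun y => y ^ 4)]
    have heq : p * (-s / w) ^ 4 + q * (-t / w) ^ 4 + r * (u / w) ^ 4 = S4 / w ^ 4 := by
      simp only [hS4_def]; field_simp
    rw [heq]
    calc S4 / w ^ 4 ≤ S4 := div_le_self hS4nn hw4
      _ ≤ x + ε' := hS4le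
  · -- P(ξ ≥ 0)
    simp only [Measure.add_apply, Measure.smul_apply, smul_eq_mul, Measure.dirac_apply]
    rw [Set.indicator_of_notMem, Set.indicator_of_notMem, Set.indicator_of_mem]
    · simp only [Pi.one_apply, mul_one, mul_zero, zero_add, add_zero]
    · exact Set.mem_setOf.mpr (le_of_lt (div_pos hupos hwpos))
    · exact fun h => absurd (Set.mem_setOf.mp h)
        (not_le.mpr (div_neg_of_neg_of_pos (by linarith) hwpos))
    · exact fun h => absurd (Set.mem_setOf.mp h)
        (not_le.mpr (div_neg_of_neg_of_pos (by linarith) hwpos))
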